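/- Let Ω be a compact metric space, T a homeomorphism, A: Ω → GL(2,ℂ) continuous with |det A(ω)| = 1. Suppose there exist N ∈ ℤ₊ and ε > 0 such that for every ω ∈ Ω and unit vector v ∈ ℂ² there is n with |n| ≤ N and ‖Aⁿ(ω)v‖ > 1 + ε. Then for every ω ∈ Ω and unit vector v, there exists a strictly monotone integer sequence (n_k)_{k≥0} with n₀ = 0, |n_k − n_{k−1}| ≤ N for all k ≥ 1, and ‖A^{n_k}(ω)v‖ > (1+ε)^k for all k ≥ 1. -/

import Mathlib

noncomputable section

abbrev E2 := EuclideanSpace ℂ (Fin 2)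
abbrev M2 := Matrix (Fin 2) (Fin 2) ℂ

noncomputable def opNorm (M : M2) : ℝ :=
  ‖Matrix.toEuclideanCLM (𝕜 := ℂ) (n := Fin 2) M‖

noncomputable def mulV (M : M2) (v : E2) : E2 :=
  Matrix.toEuclideanCLM (𝕜 := ℂ) (n := Fin 2) M v

variable {Ω : Type*} [MetricSpace Ω]

noncomputable def fwd (T : Ω ≃ₜ Ω) (A : Ω → M2) : ℕ → Ω → M2
  | 0, _ => 1
  | n + 1, ω => fwd T A n (T ω) * A ω

noncomputable def coc (T : Ω ≃ₜ Ω) (A : Ω → M2) (n : ℤ) (ω : Ω) : M2 :=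
  if 0 ≤ n then fwd T A n.toNat ω
  else (fwd T A (-n).toNat ((⇑T.symm)^[(-n).toNat] ω))⁻¹

namespace MGS

/-! ### Auxiliary lemmas about `mulV` -/

lemma mulV_mul (M N : M2) (v : E2) : mulV (M * N) v = mulV M (mulV N v) := by
  simp [mulV, map_mul, ContinuousLinearMap.mul_apply]

lemma mulV_one (v : E2) : mulV 1 v = v := by
  simp [mulV, map_one]

lemma mulV_smul (M : M2) (c : ℂ) (v : E2) : mulV M (c • v) = c • mulV M v := by
  simp [mulV, map_smul]

lemma mulV_zero (M : M2) : mulV M 0 = 0 := by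
  simp [mulV, map_zero]

/-! ### The cocycle as a unit-valued map, and the cocycle identity -/

variable {A : Ω → M2}

noncomputable def fwdU (T : Ω ≃ₜ Ω) (hinv : ∀ ω, IsUnit (A ω)) : ℕ → Ω → M2ˣ
  | 0, _ => 1
  | n + 1, ω => fwdU T hinv n (T ω) * (hinv ω).unit

variable (T : Ω ≃ₜ Ω) (hinv : ∀ ω, IsUnit (A ω))

lemma fwdU_coe : ∀ (n : ℕ) (ω : Ω), (↑(fwdU T hinv n ω) : M2) = fwd T A n ω
  | 0, ω => rfl
  | n + 1, ω => by
    rw [fwdU, fwd, Units.val_mul, fwdU_coe n (T ω), IsUnit.unit_spec]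

def zpt (n : ℤ) (ω : Ω) : Ω := ((T.toEquiv : Equiv.Perm Ω) ^ n) ω

lemma zpt_add (m n : ℤ) (ω : Ω) : zpt T (m + n) ω = zpt T m (zpt T n ω) := by
  rw [zpt, zpt, zpt, zpow_add, Equiv.Perm.mul_apply]

lemma zpt_ofNat (n : ℕ) (ω : Ω) : zpt T (n : ℤ) ω = (⇑T)^[n] ω := by
  rw [zpt, zpow_natCast, ← Equiv.Perm.iterate_eq_pow]
  rfl

lemma zpt_neg_ofNat (n : ℕ) (ω : Ω) : zpt T (-(n : ℤ)) ω = (⇑T.symm)^[n] ω := by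
  rw [zpt, zpow_neg, zpow_natCast, ← inv_pow, ← Equiv.Perm.iterate_eq_pow]
  rfl

lemma zpt_nonneg {n : ℤ} (h : 0 ≤ n) (ω : Ω) : zpt T n ω = (⇑T)^[n.toNat] ω := by
  rw [← zpt_ofNat, Int.toNat_of_nonneg h]

lemma zpt_nonpos {n : ℤ} (h : n ≤ 0) (ω : Ω) : zpt T n ω = (⇑T.symm)^[(-n).toNat] ω := by
  rw [← zpt_neg_ofNat, Int.toNat_of_nonneg (by omega), neg_neg]

noncomputable def cocU (n : ℤ) (ω : Ω) : M2ˣ :=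
  if 0 ≤ n then fwdU T hinv n.toNat ω
  else (fwdU T hinv (-n).toNat ((⇑T.symm)^[(-n).toNat] ω))⁻¹

lemma cocU_coe (n : ℤ) (ω : Ω) : (↑(cocU T hinv n ω) : M2) = coc T A n ω := by
  rw [cocU, coc]
  split
  · exact fwdU_coe T hinv _ ω
  · rw [← fwdU_coe T hinv]
    exact Matrix.coe_units_inv _

lemma cocU_nonpos {n : ℤ} (h : n ≤ 0) (ω : Ω) :
    cocU T hinv n ω = (fwdU T hinv (-n).toNat ((⇑T.symm)^[(-n).toNat] ω))⁻¹ := by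
  rcases eq_or_lt_of_le h with rfl | h'
  · simp [cocU, fwdU]
  · rw [cocU, if_neg (by omega)]

lemma fwdU_succ' (n : ℕ) (ω : Ω) :
    fwdU T hinv (n + 1) ω = (hinv ((⇑T)^[n] ω)).unit * fwdU T hinv n ω := by
  induction n generalizing ω with
  | zero => simp [fwdU]
  | succ n ih =>
    rw [fwdU, ih (T ω), fwdU, ← Function.iterate_succ_apply, mul_assoc]

lemma cocU_succ (k : ℤ) (ω : Ω) :
    cocU T hinv (k + 1) ω = (hinv (zpt T k ω)).unit * cocU T hinv k ω := by
  rcases le_or_gt 0 k with h | h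
  · lift k to ℕ using h
    rw [zpt_ofNat]
    have h1 : ((k : ℤ) + 1) = ((k + 1 : ℕ) : ℤ) := by push_cast; ring
    rw [h1, cocU, if_pos (by positivity), cocU, if_pos (by positivity),
      Int.toNat_natCast, Int.toNat_natCast, fwdU_succ']
  · obtain ⟨j, rfl⟩ : ∃ j : ℕ, k = -((j : ℤ) + 1) := ⟨(-k).toNat - 1, by omega⟩
    have h1 : (-((j : ℤ) + 1) + 1) = -(j : ℤ) := by ring
    have h2 : (- -((j : ℤ) + 1)).toNat = j + 1 := by omega
    have h3 : (- -(j : ℤ)).toNat = j := by omega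
    rw [h1, cocU_nonpos T hinv (by omega), cocU_nonpos T hinv (by omega), h2, h3,
      zpt_nonpos T (by omega), h2]
    have h4 : fwdU T hinv (j + 1) ((⇑T.symm)^[j + 1] ω)
        = fwdU T hinv j ((⇑T.symm)^[j] ω) * (hinv ((⇑T.symm)^[j + 1] ω)).unit := by
      rw [fwdU]
      congr 2
      rw [Function.iterate_succ_apply']
      exact T.apply_symm_apply _
    rw [h4, mul_inv_rev, ← mul_assoc, mul_inv_cancel, one_mul]

lemma cocU_add (m n : ℤ) (ω : Ω) :
    cocU T hinv (m + n) ω = cocU T hinv m (zpt T n ω) * cocU T hinv n ω := by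
  induction m using Int.induction_on with
  | zero => simp [cocU, fwdU, zero_add]
  | succ m ih =>
    have e1 : (m : ℤ) + 1 + n = (m + n) + 1 := by ring
    rw [e1, cocU_succ, ih, cocU_succ, zpt_add, mul_assoc]
  | pred m ih =>
    have e1 : (-(m : ℤ) - 1 + n) + 1 = -(m : ℤ) + n := by ring
    have e2 : (-(m : ℤ) - 1) + 1 = -(m : ℤ) := by ring
    have s1 := cocU_succ T hinv (-(m : ℤ) - 1 + n) ω
    rw [e1, ih] at s1
    have s2 := cocU_succ T hinv (-(m : ℤ) - 1) (zpt T n ω)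
    rw [e2] at s2
    have e3 : zpt T (-(m:ℤ) - 1) (zpt T n ω) = zpt T (-(m:ℤ) - 1 + n) ω := by
      rw [zpt_add]
    rw [← e3] at s1
    have hY : cocU T hinv (-(m:ℤ) - 1 + n) ω
        = ((hinv (zpt T (-(m:ℤ) - 1) (zpt T n ω))).unit)⁻¹
          * (cocU T hinv (-(m:ℤ)) (zpt T n ω) * cocU T hinv n ω) := by
      rw [s1]
      group
    rw [hY, s2]
    group

include hinv in
lemma coc_mul (m n : ℤ) (ω : Ω) :
    coc T A m (zpt T n ω) * coc T A n ω = coc T A (m + n) ω := by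
  rw [← cocU_coe T hinv, ← cocU_coe T hinv, ← cocU_coe T hinv, ← Units.val_mul,
    cocU_add]

/-! ### Combinatorial extraction of a monotone growth sequence -/

lemma mono_extract (f : ℤ → ℝ) (N : ℕ) (ε : ℝ) (hε : 0 < ε)
    (a : ℕ → ℤ) (ha0 : a 0 = 0) (hstep : ∀ k, |a (k + 1) - a k| ≤ (N : ℤ))
    (hgrow : ∀ k : ℕ, (1 + ε) ^ (k + 1) < f (a (k + 1)))
    (hinf : ∀ M : ℤ, ∃ K : ℕ, ∀ k ≥ K, M < a k) :
    ∃ m : ℕ → ℤ, StrictMono m ∧ m 0 = 0 ∧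
      ∀ k : ℕ, 1 ≤ k → |m k - m (k - 1)| ≤ (N : ℤ) ∧ (1 + ε) ^ k < f (m k) := by
  classical
  set κ : ℤ → ℕ := fun t => sSup {k | a k ≤ t} with hκdef
  have hbdd : ∀ t : ℤ, BddAbove {k | a k ≤ t} := by
    intro t
    obtain ⟨K, hK⟩ := hinf t
    exact ⟨K, fun k hk => le_of_not_gt fun h => absurd (hK k h.le) (not_lt.mpr hk)⟩
  have hκ_mem : ∀ t : ℤ, 0 ≤ t → a (κ t) ≤ t := by
    intro t ht
    exact Nat.sSup_mem ⟨0, by simpa [ha0] using ht⟩ (hbdd t)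
  have hκ_lt : ∀ t : ℤ, 0 ≤ t → t < a (κ t + 1) := by
    intro t ht
    by_contra h
    push_neg at h
    have : κ t + 1 ≤ κ t := le_csSup (hbdd t) h
    omega
  let m : ℕ → ℤ := fun j => Nat.rec (0 : ℤ) (fun _ prev => a (κ prev + 1)) j
  have hm0 : m 0 = 0 := rfl
  have hmsucc : ∀ j, m (j + 1) = a (κ (m j) + 1) := fun j => rfl
  have hpos : ∀ j, 0 ≤ m j := by
    intro j
    induction j with
    | zero => simp [hm0]
    | succ j ih =>
      have := hκ_lt (m j) ih
      rw [hmsucc]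
      omega
  have hlt : ∀ j, m j < m (j + 1) := by
    intro j
    rw [hmsucc]
    exact hκ_lt (m j) (hpos j)
  have hstep' : ∀ j, m (j + 1) ≤ m j + N := by
    intro j
    have h1 := hstep (κ (m j))
    have h2 := hκ_mem (m j) (hpos j)
    rw [hmsucc]
    rw [abs_le] at h1
    omega
  have hκj : ∀ j, j ≤ κ (m j) := by
    intro j
    induction j with
    | zero => exact Nat.zero_le _
    | succ j ih =>
      have hmem : κ (m j) + 1 ∈ {k | a k ≤ m (j + 1)} := by
        simp only [Set.mem_setOf_eq, hmsucc j]
        exact le_rfl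
      have hle : κ (m j) + 1 ≤ κ (m (j + 1)) := le_csSup (hbdd (m (j + 1))) hmem
      omega
  have hgrowm : ∀ j : ℕ, (1 + ε) ^ (j + 1) < f (m (j + 1)) := by
    intro j
    have h1 : (1 + ε) ^ (j + 1) ≤ (1 + ε) ^ (κ (m j) + 1) :=
      pow_le_pow_right₀ (by linarith) (by have := hκj j; omega)
    have h2 := hgrow (κ (m j))
    rw [hmsucc]
    linarith
  refine ⟨m, strictMono_nat_of_lt_succ hlt, hm0, ?_⟩
  intro k hk
  obtain ⟨j, rfl⟩ : ∃ j, k = j + 1 := ⟨k - 1, by omega⟩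
  simp only [Nat.add_sub_cancel]
  refine ⟨?_, hgrowm j⟩
  have h1 := hlt j
  have h2 := hstep' j
  rw [abs_le]
  omega

lemma chain_all (f : ℤ → ℝ) (N : ℕ) (hN : 0 < N) (ε : ℝ) (hε : 0 < ε) (hf0 : f 0 = 1)
    (key : ∀ m : ℤ, ∃ s : ℤ, |s| ≤ (N : ℤ) ∧ (1 + ε) * f m < f (m + s)) :
    ∃ nk : ℕ → ℤ, (StrictMono nk ∨ StrictAnti nk) ∧ nk 0 = 0 ∧
      ∀ k : ℕ, 1 ≤ k → |nk k - nk (k - 1)| ≤ (N : ℤ) ∧ (1 + ε) ^ k < f (nk k) := by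
  classical
  choose s hs1 hs2 using key
  set g : ℤ → ℤ := fun m => m + s m with hgdef
  set a : ℕ → ℤ := fun k => g^[k] 0 with hadef
  have ha0 : a 0 = 0 := rfl
  have hasucc : ∀ k, a (k + 1) = g (a k) := fun k => Function.iterate_succ_apply' g k 0
  have hstep : ∀ k, |a (k + 1) - a k| ≤ (N : ℤ) := by
    intro k
    rw [hasucc]
    simpa [hgdef] using hs1 (a k)
  have hcons : ∀ k, (1 + ε) * f (a k) < f (a (k + 1)) := by
    intro k
    rw [hasucc]
    exact hs2 (a k)
  have hε1 : (0 : ℝ) < 1 + ε := by linarith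
  have hgrow0 : ∀ k, (1 + ε) ^ k ≤ f (a k) := by
    intro k
    induction k with
    | zero => simp [ha0, hf0]
    | succ k ih =>
      have h1 := hcons k
      have h2 : (1 + ε) ^ (k + 1) = (1 + ε) * (1 + ε) ^ k := by ring
      nlinarith
  have hgrow : ∀ k : ℕ, (1 + ε) ^ (k + 1) < f (a (k + 1)) := by
    intro k
    have h1 := hcons k
    have h2 := hgrow0 k
    have h3 : (1 + ε) ^ (k + 1) = (1 + ε) * (1 + ε) ^ k := by ring
    nlinarith
  have hshift : ∀ (d x : ℕ), a (x + d) = g^[d] (a x) := by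
    intro d x
    simp [hadef, Nat.add_comm x d, Function.iterate_add_apply]
  have key2 : ∀ i j : ℕ, i < j → a i ≠ a j := by
    intro i j hij heq
    set d := j - i with hd
    have hd1 : 1 ≤ d := by omega
    have hper : ∀ t : ℕ, a (i + t * d) = a i := by
      intro t
      induction t with
      | zero => simp
      | succ t ih =>
        have e : i + (t + 1) * d = (i + t * d) + d := by ring
        rw [e, hshift d, ih, ← hshift d, show i + d = j by omega, ← heq]
    obtain ⟨t, ht⟩ := pow_unbounded_of_one_lt (f (a i)) (by linarith : (1 : ℝ) < 1 + ε)
    have hidx : t ≤ i + (t + 1) * d := by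
      have : (t + 1) * 1 ≤ (t + 1) * d := Nat.mul_le_mul_left _ hd1
      omega
    have hbig : (1 + ε) ^ t ≤ (1 + ε) ^ (i + (t + 1) * d) :=
      pow_le_pow_right₀ (by linarith) hidx
    have := hgrow0 (i + (t + 1) * d)
    rw [hper (t + 1)] at this
    linarith
  have hinj : Function.Injective a := by
    intro i j h
    by_contra hne
    rcases Nat.lt_or_ge i j with hij | hij
    · exact key2 i j hij h
    · exact key2 j i (by omega) h.symm
  have hesc : ∀ l u : ℤ, ∃ K : ℕ, ∀ k ≥ K, a k ∉ Set.Icc l u := by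
    intro l u
    have hfin : {k : ℕ | a k ∈ Set.Icc l u}.Finite :=
      (Set.finite_Icc l u).preimage hinj.injOn
    obtain ⟨b, hb⟩ := hfin.bddAbove
    exact ⟨b + 1, fun k hk hmem => by have := hb hmem; omega⟩
  obtain ⟨K₀, hK₀⟩ := hesc (-(N : ℤ)) N
  have hsign : ∀ k, K₀ ≤ k → (0 ≤ a K₀ ↔ 0 ≤ a k) := by
    intro k hk
    induction k, hk using Nat.le_induction with
    | base => exact Iff.rfl
    | succ k hk ih =>
      have h1 := hstep k
      have h2 := hK₀ (k + 1) (by omega)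
      have h3 := hK₀ k (by omega)
      rw [abs_le] at h1
      simp only [Set.mem_Icc, not_and_or, not_le] at h2 h3
      rw [ih]
      omega
  rcases le_or_gt 0 (a K₀) with hposc | hnegc
  · have hinf : ∀ M : ℤ, ∃ K : ℕ, ∀ k ≥ K, M < a k := by
      intro M
      obtain ⟨K₁, hK₁⟩ := hesc 0 (max M 0)
      refine ⟨max K₀ K₁, fun k hk => ?_⟩
      have h0 : 0 ≤ a k := (hsign k (le_trans (le_max_left _ _) hk)).mp hposc
      have h1 := hK₁ k (le_trans (le_max_right _ _) hk)
      simp only [Set.mem_Icc, not_and_or, not_le] at h1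
      have := le_max_left M (0 : ℤ)
      omega
    obtain ⟨m, hmono, hm0, hm⟩ := mono_extract f N ε hε a ha0 hstep hgrow hinf
    exact ⟨m, Or.inl hmono, hm0, hm⟩
  · have hinf : ∀ M : ℤ, ∃ K : ℕ, ∀ k ≥ K, M < -(a k) := by
      intro M
      obtain ⟨K₁, hK₁⟩ := hesc (min (-M) 0) 0
      refine ⟨max K₀ K₁, fun k hk => ?_⟩
      have h0 : ¬(0 ≤ a k) := fun h =>
        absurd ((hsign k (le_trans (le_max_left _ _) hk)).mpr h) (by omega)
      have h1 := hK₁ k (le_trans (le_max_right _ _) hk)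
      simp only [Set.mem_Icc, not_and_or, not_le] at h1
      have := min_le_left (-M) (0 : ℤ)
      omega
    obtain ⟨m, hmono, hm0, hm⟩ := mono_extract (fun t => f (-t)) N ε hε
      (fun k => -(a k)) (by simp [ha0]) (fun k => by rw [neg_sub_neg, abs_sub_comm]; exact hstep k)
      (fun k => by simpa using hgrow k) hinf
    refine ⟨fun k => -(m k), Or.inr (fun i j h => neg_lt_neg (hmono h)), by simp [hm0], ?_⟩
    intro k hk
    obtain ⟨h1, h2⟩ := hm k hk
    constructor
    · rw [neg_sub_neg, abs_sub_comm]
      exact h1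
    · simpa using h2

end MGS

/-- under the uniform window-expansion property, every unit vector
admits a strictly monotone integer sequence `n_k` with `n₀ = 0`, steps of size
at most `N`, along which the cocycle grows like `(1+ε)^k`. -/
theorem monotone_growth_sequence [CompactSpace Ω]
    (T : Ω ≃ₜ Ω) (A : Ω → M2) (hA : Continuous A)
    (hinv : ∀ ω, IsUnit (A ω)) (hdet : ∀ ω, ‖(A ω).det‖ = 1)
    (N : ℕ) (hN : 0 < N) (ε : ℝ) (hε : 0 < ε)
    (hexp : ∀ (ω : Ω) (v : E2), ‖v‖ = 1 →
      ∃ n : ℤ, |n| ≤ (N : ℤ) ∧ 1 + ε < ‖mulV (coc T A n ω) v‖) :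
    ∀ (ω : Ω) (v : E2), ‖v‖ = 1 →
      ∃ nk : ℕ → ℤ, (StrictMono nk ∨ StrictAnti nk) ∧ nk 0 = 0 ∧
        ∀ k : ℕ, 1 ≤ k →
          |nk k - nk (k - 1)| ≤ (N : ℤ) ∧
          (1 + ε) ^ k < ‖mulV (coc T A (nk k) ω) v‖ := by
  intro ω v hv
  set f : ℤ → ℝ := fun m => ‖mulV (coc T A m ω) v‖ with hfdef
  have hcoc0 : coc T A 0 ω = 1 := by
    rw [coc, if_pos le_rfl]
    rfl
  have hf0 : f 0 = 1 := by
    rw [hfdef]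
    simp only [hcoc0, MGS.mulV_one]
    exact hv
  have hvne : v ≠ 0 := fun h => by rw [h, norm_zero] at hv; exact one_ne_zero hv.symm
  have hfpos : ∀ m : ℤ, 0 < f m := by
    intro m
    have hne : mulV (coc T A m ω) v ≠ 0 := by
      intro h0
      apply hvne
      have h1 : mulV ↑(MGS.cocU T hinv m ω)⁻¹ (mulV (coc T A m ω) v) = v := by
        rw [← MGS.cocU_coe T hinv m ω, ← MGS.mulV_mul, Units.inv_mul, MGS.mulV_one]
      rw [h0, MGS.mulV_zero] at h1
      exact h1.symm
    exact norm_pos_iff.mpr hne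
  have key : ∀ m : ℤ, ∃ s : ℤ, |s| ≤ (N : ℤ) ∧ (1 + ε) * f m < f (m + s) := by
    intro m
    set w : E2 := mulV (coc T A m ω) v with hwdef
    set c : ℂ := ((f m : ℝ) : ℂ)⁻¹ with hcdef
    have hfm : f m = ‖w‖ := rfl
    have hnc : ‖c‖ = (f m)⁻¹ := by
      rw [hcdef, norm_inv, Complex.norm_real, Real.norm_eq_abs,
        abs_of_pos (hfpos m)]
    have hu1 : ‖c • w‖ = 1 := by
      rw [norm_smul, hnc, ← hfm, inv_mul_cancel₀ (hfpos m).ne']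
    obtain ⟨s, hsN, hsg⟩ := hexp (MGS.zpt T m ω) (c • w) hu1
    refine ⟨s, hsN, ?_⟩
    have hcm : mulV (coc T A s (MGS.zpt T m ω)) (c • w)
        = c • mulV (coc T A (s + m) ω) v := by
      rw [MGS.mulV_smul, hwdef, ← MGS.mulV_mul, MGS.coc_mul T hinv]
    rw [hcm, norm_smul, hnc] at hsg
    have h2 : (1 + ε) * f m < f (s + m) := by
      have := mul_lt_mul_of_pos_right hsg (hfpos m)
      calc (1 + ε) * f m < (f m)⁻¹ * ‖mulV (coc T A (s + m) ω) v‖ * f m := this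
        _ = f (s + m) := by
          rw [mul_comm ((f m)⁻¹), mul_assoc, inv_mul_cancel₀ (hfpos m).ne', mul_one]
    rwa [add_comm s m] at h2
  obtain ⟨nk, hmono, hnk0, hnk⟩ := MGS.chain_all f N hN ε hε hf0 key
  exact ⟨nk, hmono, hnk0, hnk⟩

end
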